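/- For every λ ∈ ℂ and every real s ≥ 0, one has √|λ| ≤ |√(λ + s²) + s|. -/

import Mathlib

open MeasureTheory Real

/-- Principal complex square root `√z = z^(1/2)` (principal branch of `cpow`). -/
noncomputable def csqrt (z : ℂ) : ℂ := z ^ (1/2 : ℂ)

/-- The sector `Σ_ε = {λ ∈ ℂ : λ ≠ 0, |Arg λ| < π − ε}`. -/
def SigmaSector (ε : ℝ) : Set ℂ := {l : ℂ | l ≠ 0 ∧ |l.arg| < Real.pi - ε}

/-- Mikhlin condition (M) with constant `cbar`, with `K = ⌊(d+1)/2⌋`. -/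
def CondM (d : ℕ) (m : EuclideanSpace ℝ (Fin (d-1)) → ℂ) (cbar : ℝ) : Prop :=
  ContDiffOn ℝ ((d+1)/2 : ℕ) m {ξ : EuclideanSpace ℝ (Fin (d-1)) | ξ ≠ 0} ∧
  ∀ k : ℕ, k ≤ (d+1)/2 → ∀ ξ : EuclideanSpace ℝ (Fin (d-1)), ξ ≠ 0 →
    ‖ξ‖ ^ k * ‖iteratedFDerivWithin ℝ k m
        {ξ : EuclideanSpace ℝ (Fin (d-1)) | ξ ≠ 0} ξ‖ ≤ cbar

/-- Parameterized Mikhlin condition (M*) with constants `(cbar, δ)`, `K = ⌊(d+1)/2⌋`. -/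
def CondMStar (d : ℕ) (m : EuclideanSpace ℝ (Fin (d-1)) → ℝ → ℂ) (cbar δ : ℝ) : Prop :=
  (∀ y : ℝ, 0 ≤ y →
    ContDiffOn ℝ ((d+1)/2 : ℕ) (fun ξ => m ξ y)
      {ξ : EuclideanSpace ℝ (Fin (d-1)) | ξ ≠ 0}) ∧
  ∀ k : ℕ, k ≤ (d+1)/2 →
    ∀ ξ : EuclideanSpace ℝ (Fin (d-1)), ξ ≠ 0 → ∀ y : ℝ, 0 ≤ y →
      ‖ξ‖ ^ k * ‖iteratedFDerivWithin ℝ k (fun ξ => m ξ y)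
          {ξ : EuclideanSpace ℝ (Fin (d-1)) | ξ ≠ 0} ξ‖ ≤
        cbar * Real.exp (-δ * ‖ξ‖ * y) / (1 + y)

/-- The fundamental multiplier `m₀(s, y)`. -/
noncomputable def m0 (l : ℂ) (α : ℝ) (s y : ℝ) : ℂ :=
  ((csqrt (l + (s:ℂ)^2) + s) / ((α:ℂ) + l + csqrt (l + (s:ℂ)^2) + s)) *
    ((Complex.exp (-(y:ℂ) * csqrt (l + (s:ℂ)^2)) - Complex.exp (-(y:ℂ) * s)) / l)

/-- `E(s, y) = e^{-ys} - e^{-y√(λ+s²)}`. -/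
noncomputable def Efun (l : ℂ) (s y : ℝ) : ℂ :=
  Complex.exp (-(y:ℂ) * s) - Complex.exp (-(y:ℂ) * csqrt (l + (s:ℂ)^2))

lemma csqrt_re_nonneg (z : ℂ) : 0 ≤ (csqrt z).re := by
  unfold csqrt
  rcases eq_or_ne z 0 with rfl | hz
  · simp [Complex.zero_cpow (by norm_num : (1/2:ℂ) ≠ 0)]
  · rw [Complex.cpow_def_of_ne_zero hz, Complex.exp_re]
    apply mul_nonneg (Real.exp_pos _).le
    apply Real.cos_nonneg_of_mem_Icc
    constructor <;> simp [Complex.log_im] <;>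
    · cases abs_le.mp (Complex.abs_arg_le_pi z) <;> nlinarith [Real.pi_pos]

lemma csqrt_sq (z : ℂ) : (csqrt z) ^ 2 = z := by
  have := Complex.cpow_nat_inv_pow z (two_ne_zero)
  simpa [csqrt, show ((2:ℕ):ℂ)⁻¹ = (1/2:ℂ) by norm_num] using this

/-- `√|λ| ≤ |√(λ+s²) + s|`. -/
theorem stmt_8 (l : ℂ) (s : ℝ) (hs : 0 ≤ s) :
    Real.sqrt ‖l‖ ≤ ‖csqrt (l + (s:ℂ)^2) + s‖ := by
  set w := csqrt (l + (s:ℂ)^2) with hw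
  have hw2 : w ^ 2 = l + (s:ℂ)^2 := csqrt_sq _
  have hre : 0 ≤ w.re := csqrt_re_nonneg _
  have hl : l = (w + s) * (w - s) := by ring_nf; rw [hw2]; ring
  have hle : ‖w - s‖ ≤ ‖w + s‖ := by
    rw [← Real.sqrt_sq (norm_nonneg _), ← Real.sqrt_sq (norm_nonneg (w + s))]
    apply Real.sqrt_le_sqrt
    rw [← Complex.normSq_eq_norm_sq, ← Complex.normSq_eq_norm_sq]
    simp [Complex.normSq_apply]
    nlinarith
  have habs : ‖l‖ ≤ ‖w + s‖ ^ 2 := by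
    rw [hl, norm_mul]
    calc ‖w + s‖ * ‖w - s‖
        ≤ ‖w + s‖ * ‖w + s‖ :=
          mul_le_mul_of_nonneg_left hle (norm_nonneg _)
      _ = ‖w + s‖ ^ 2 := (sq _).symm
  calc Real.sqrt ‖l‖ ≤ Real.sqrt (‖w + s‖ ^ 2) :=
        Real.sqrt_le_sqrt habs
    _ = ‖w + s‖ := Real.sqrt_sq (norm_nonneg _)
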